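/- Weak duality for the relaxed (penalized) capacity-constrained transport problem: let ε > 0, let h be measurable with 0 ≤ h ≤ h̄, and let (u, v, w) satisfy u + v − w + c ≥ 0, w ≤ 0, with u ∈ L²(ℝ^m), v ∈ L²(ℝ^n), w ∈ L¹(h̄ dx dy). Then Iᶜ_ε(h) := ∬ c h + (1/(2ε))‖⟨h⟩_x − f‖²_{L²} + (1/(2ε))‖⟨h⟩_y − g‖²_{L²} ≥ −∫uf − ∫vg + ∬ w h̄ − (ε/2)‖u‖²_{L²} − (ε/2)‖v‖²_{L²}, whenever both sides are finite. -/

import Mathlib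

open MeasureTheory

set_option maxHeartbeats 1000000 in
/-- Weak duality for the relaxed (penalized) capacity-constrained transport
problem: for `0 ≤ h ≤ h̄` and dual-feasible `(u,v,w)` (`u+v−w+c ≥ 0`, `w ≤ 0`, `u,v ∈ L²`,
`w ∈ L¹(h̄ dxdy)`) one has `Iᶜ_ε(h) ≥ Jᵉ(u,v,w)`, i.e.
`∬ch + (1/(2ε))‖⟨h⟩ₓ−f‖² + (1/(2ε))‖⟨h⟩_y−g‖² ≥ −∫uf − ∫vg + ∬wh̄ − (ε/2)‖u‖² − (ε/2)‖v‖²`. -/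
theorem relaxed_weak_duality (m n : ℕ) (ε : ℝ) (hε : 0 < ε)
    (hbar c : (Fin m → ℝ) × (Fin n → ℝ) → ℝ)
    (f : (Fin m → ℝ) → ℝ) (g : (Fin n → ℝ) → ℝ)
    (hbar_meas : Measurable hbar) (hbar_nonneg : ∀ p, 0 ≤ hbar p)
    (hbar_bdd : ∃ C, ∀ p, hbar p ≤ C) (hbar_supp : HasCompactSupport hbar)
    (f_meas : Measurable f) (f_nonneg : ∀ x, 0 ≤ f x)
    (f_int : Integrable f) (f_mass : ∫ x, f x = 1)
    (f_sq_int : Integrable (fun x => (f x) ^ 2))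
    (g_meas : Measurable g) (g_nonneg : ∀ y, 0 ≤ g y)
    (g_int : Integrable g) (g_mass : ∫ y, g y = 1)
    (g_sq_int : Integrable (fun y => (g y) ^ 2))
    (c_locint : LocallyIntegrable c)
    (h : (Fin m → ℝ) × (Fin n → ℝ) → ℝ) (h_meas : Measurable h)
    (h_bds : ∀ᵐ p, 0 ≤ h p ∧ h p ≤ hbar p)
    (u : (Fin m → ℝ) → ℝ) (v : (Fin n → ℝ) → ℝ)
    (w : (Fin m → ℝ) × (Fin n → ℝ) → ℝ)
    (u_meas : Measurable u) (v_meas : Measurable v) (w_meas : Measurable w)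
    (u_sq_int : Integrable (fun x => (u x) ^ 2))
    (v_sq_int : Integrable (fun y => (v y) ^ 2))
    (uf_int : Integrable (fun x => u x * f x))
    (vg_int : Integrable (fun y => v y * g y))
    (whbar_int : Integrable (fun p => w p * hbar p))
    (feas : ∀ᵐ p : (Fin m → ℝ) × (Fin n → ℝ), 0 ≤ u p.1 + v p.2 - w p + c p)
    (w_nonpos : ∀ᵐ p : (Fin m → ℝ) × (Fin n → ℝ), w p ≤ 0)
    (ch_int : Integrable (fun p => c p * h p))
    (margx_sq_int : Integrable (fun x => ((∫ y, h (x, y)) - f x) ^ 2))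
    (margy_sq_int : Integrable (fun y => ((∫ x, h (x, y)) - g y) ^ 2)) :
    -(∫ x, u x * f x) - (∫ y, v y * g y) + (∫ p, w p * hbar p)
        - (ε / 2) * (∫ x, (u x) ^ 2) - (ε / 2) * (∫ y, (v y) ^ 2) ≤
      (∫ p, c p * h p) + (1 / (2 * ε)) * (∫ x, ((∫ y, h (x, y)) - f x) ^ 2)
        + (1 / (2 * ε)) * (∫ y, ((∫ x, h (x, y)) - g y) ^ 2) := by
  obtain ⟨C, hC⟩ := hbar_bdd
  have hC0 : 0 ≤ C := le_trans (hbar_nonneg ⟨fun _ => 0, fun _ => 0⟩) (hC _)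
  set K : Set ((Fin m → ℝ) × (Fin n → ℝ)) := tsupport hbar with hKdef
  have hKc : IsCompact K := hbar_supp
  have hK1c : IsCompact (Prod.fst '' K) := hKc.image continuous_fst
  have hK2c : IsCompact (Prod.snd '' K) := hKc.image continuous_snd
  have hK1m : MeasurableSet (Prod.fst '' K) := hK1c.measurableSet
  have hK2m : MeasurableSet (Prod.snd '' K) := hK2c.measurableSet
  -- ae facts
  have h_nonneg : ∀ᵐ p : (Fin m → ℝ) × (Fin n → ℝ), 0 ≤ h p := h_bds.mono fun p hp => hp.1
  have h_le : ∀ᵐ p : (Fin m → ℝ) × (Fin n → ℝ), h p ≤ hbar p := h_bds.mono fun p hp => hp.2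
  -- integrability of w * h
  have wh_int : Integrable (fun p => w p * h p) := by
    refine whbar_int.mono ((w_meas.mul h_meas).aestronglyMeasurable) ?_
    filter_upwards [h_bds] with p hp
    rw [Real.norm_eq_abs, Real.norm_eq_abs, abs_mul, abs_mul,
      abs_of_nonneg hp.1, abs_of_nonneg (hbar_nonneg p)]
    exact mul_le_mul_of_nonneg_left hp.2 (abs_nonneg _)
  -- integrable indicator helpers
  have indu_int : Integrable ((Prod.fst '' K).indicator (fun x => |u x|)) := by
    rw [integrable_indicator_iff hK1m]
    have hone : IntegrableOn (fun _ : Fin m → ℝ => (1:ℝ)) (Prod.fst '' K) :=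
      integrableOn_const hK1c.measure_lt_top.ne
    have bnd : IntegrableOn (fun x => (u x ^ 2 + 1) / 2) (Prod.fst '' K) :=
      (u_sq_int.integrableOn.add hone).div_const 2
    refine Integrable.mono bnd u_meas.abs.aestronglyMeasurable.restrict ?_
    refine Filter.Eventually.of_forall fun x => ?_
    rw [Real.norm_eq_abs, Real.norm_eq_abs, abs_abs]
    have h1 : (0:ℝ) ≤ (u x ^ 2 + 1) / 2 := by positivity
    rw [abs_of_nonneg h1]
    nlinarith [sq_nonneg (|u x| - 1), sq_abs (u x)]
  have indv_int : Integrable ((Prod.snd '' K).indicator (fun y => |v y|)) := by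
    rw [integrable_indicator_iff hK2m]
    have hone : IntegrableOn (fun _ : Fin n → ℝ => (1:ℝ)) (Prod.snd '' K) :=
      integrableOn_const hK2c.measure_lt_top.ne
    have bnd : IntegrableOn (fun y => (v y ^ 2 + 1) / 2) (Prod.snd '' K) :=
      (v_sq_int.integrableOn.add hone).div_const 2
    refine Integrable.mono bnd v_meas.abs.aestronglyMeasurable.restrict ?_
    refine Filter.Eventually.of_forall fun y => ?_
    rw [Real.norm_eq_abs, Real.norm_eq_abs, abs_abs]
    have h1 : (0:ℝ) ≤ (v y ^ 2 + 1) / 2 := by positivity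
    rw [abs_of_nonneg h1]
    nlinarith [sq_nonneg (|v y| - 1), sq_abs (v y)]
  have indC1_int : Integrable ((Prod.fst '' K).indicator (fun _ : Fin m → ℝ => C)) := by
    rw [integrable_indicator_iff hK1m]
    exact integrableOn_const hK1c.measure_lt_top.ne
  have indC2_int : Integrable ((Prod.snd '' K).indicator (fun _ : Fin n → ℝ => C)) := by
    rw [integrable_indicator_iff hK2m]
    exact integrableOn_const hK2c.measure_lt_top.ne
  -- bound hbar by indicators
  have key_u : ∀ p : (Fin m → ℝ) × (Fin n → ℝ), |u p.1| * hbar p ≤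
      ((Prod.fst '' K).indicator (fun x => |u x|) p.1) *
      ((Prod.snd '' K).indicator (fun _ => C) p.2) := by
    intro p
    by_cases hp : p ∈ K
    · rw [Set.indicator_of_mem (Set.mem_image_of_mem Prod.fst hp),
        Set.indicator_of_mem (Set.mem_image_of_mem Prod.snd hp)]
      exact mul_le_mul_of_nonneg_left (hC p) (abs_nonneg _)
    · rw [image_eq_zero_of_notMem_tsupport hp, mul_zero]
      exact mul_nonneg (Set.indicator_nonneg (fun x _ => abs_nonneg _) _)
        (Set.indicator_nonneg (fun y _ => hC0) _)
  have key_v : ∀ p : (Fin m → ℝ) × (Fin n → ℝ), |v p.2| * hbar p ≤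
      ((Prod.fst '' K).indicator (fun _ => C) p.1) *
      ((Prod.snd '' K).indicator (fun y => |v y|) p.2) := by
    intro p
    by_cases hp : p ∈ K
    · rw [Set.indicator_of_mem (Set.mem_image_of_mem Prod.fst hp),
        Set.indicator_of_mem (Set.mem_image_of_mem Prod.snd hp), mul_comm C]
      exact mul_le_mul_of_nonneg_left (hC p) (abs_nonneg _)
    · rw [image_eq_zero_of_notMem_tsupport hp, mul_zero]
      exact mul_nonneg (Set.indicator_nonneg (fun x _ => hC0) _)
        (Set.indicator_nonneg (fun y _ => abs_nonneg _) _)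
  -- integrability of (p ↦ u p.1 * h p) and (p ↦ v p.2 * h p)
  have uh_int : Integrable (fun p : (Fin m → ℝ) × (Fin n → ℝ) => u p.1 * h p) := by
    have hG : Integrable (fun p : (Fin m → ℝ) × (Fin n → ℝ) =>
        ((Prod.fst '' K).indicator (fun x => |u x|) p.1) *
        ((Prod.snd '' K).indicator (fun _ => C) p.2)) := by
      rw [Measure.volume_eq_prod]
      exact indu_int.mul_prod indC2_int
    refine hG.mono ((u_meas.comp measurable_fst).mul h_meas).aestronglyMeasurable ?_
    filter_upwards [h_bds] with p hp
    rw [Real.norm_eq_abs, Real.norm_eq_abs, abs_mul, abs_of_nonneg hp.1]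
    have h2 : |u p.1| * h p ≤ |u p.1| * hbar p :=
      mul_le_mul_of_nonneg_left hp.2 (abs_nonneg _)
    refine le_trans (le_trans h2 (key_u p)) (le_abs_self _)
  have vh_int : Integrable (fun p : (Fin m → ℝ) × (Fin n → ℝ) => v p.2 * h p) := by
    have hG : Integrable (fun p : (Fin m → ℝ) × (Fin n → ℝ) =>
        ((Prod.fst '' K).indicator (fun _ => C) p.1) *
        ((Prod.snd '' K).indicator (fun y => |v y|) p.2)) := by
      rw [Measure.volume_eq_prod]
      exact indC1_int.mul_prod indv_int
    refine hG.mono ((v_meas.comp measurable_snd).mul h_meas).aestronglyMeasurable ?_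
    filter_upwards [h_bds] with p hp
    rw [Real.norm_eq_abs, Real.norm_eq_abs, abs_mul, abs_of_nonneg hp.1]
    have h2 : |v p.2| * h p ≤ |v p.2| * hbar p :=
      mul_le_mul_of_nonneg_left hp.2 (abs_nonneg _)
    refine le_trans (le_trans h2 (key_v p)) (le_abs_self _)
  -- Fubini
  have fub_u : (∫ p : (Fin m → ℝ) × (Fin n → ℝ), u p.1 * h p)
      = ∫ x, u x * ∫ y, h (x, y) := by
    rw [Measure.volume_eq_prod] at uh_int ⊢
    rw [integral_prod _ uh_int]
    simp_rw [integral_const_mul]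
  have fub_v : (∫ p : (Fin m → ℝ) × (Fin n → ℝ), v p.2 * h p)
      = ∫ y, v y * ∫ x, h (x, y) := by
    rw [Measure.volume_eq_prod] at vh_int ⊢
    rw [integral_prod_symm _ vh_int]
    simp_rw [integral_const_mul]
  -- marginal measurability
  have margx_meas : StronglyMeasurable (fun x => ∫ y, h (x, y)) :=
    h_meas.stronglyMeasurable.integral_prod_right'
  have margy_meas : StronglyMeasurable (fun y => ∫ x, h (x, y)) :=
    h_meas.stronglyMeasurable.integral_prod_left'
  -- integrability of u * (marg - f), v * (marg - g)
  have udx_int : Integrable (fun x => u x * ((∫ y, h (x, y)) - f x)) := by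
    have bnd : Integrable (fun x => ε/2 * u x ^ 2 + 1/(2*ε) * ((∫ y, h (x, y)) - f x) ^ 2) :=
      (u_sq_int.const_mul (ε/2)).add (margx_sq_int.const_mul (1/(2*ε)))
    refine Integrable.mono bnd
      ((u_meas.aestronglyMeasurable.mul
        ((margx_meas.sub f_meas.stronglyMeasurable).aestronglyMeasurable))) ?_
    refine Filter.Eventually.of_forall fun x => ?_
    rw [Real.norm_eq_abs, Real.norm_eq_abs]
    have h1 : (0:ℝ) ≤ ε/2 * u x ^ 2 + 1/(2*ε) * ((∫ y, h (x, y)) - f x) ^ 2 := by positivity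
    rw [abs_of_nonneg h1]
    have e1 : 1/(2*ε) * (((∫ y, h (x, y)) - f x) - ε * u x) ^ 2
        = ε/2 * u x ^ 2 + 1/(2*ε) * ((∫ y, h (x, y)) - f x) ^ 2
          - u x * ((∫ y, h (x, y)) - f x) := by field_simp; ring
    have e2 : 1/(2*ε) * (((∫ y, h (x, y)) - f x) + ε * u x) ^ 2
        = ε/2 * u x ^ 2 + 1/(2*ε) * ((∫ y, h (x, y)) - f x) ^ 2
          + u x * ((∫ y, h (x, y)) - f x) := by field_simp; ring
    have p1 : (0:ℝ) ≤ 1/(2*ε) * (((∫ y, h (x, y)) - f x) - ε * u x) ^ 2 := by positivity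
    have p2 : (0:ℝ) ≤ 1/(2*ε) * (((∫ y, h (x, y)) - f x) + ε * u x) ^ 2 := by positivity
    rcases abs_cases (u x * ((∫ y, h (x, y)) - f x)) with ⟨he, _⟩ | ⟨he, _⟩ <;> rw [he] <;>
      linarith
  have vdy_int : Integrable (fun y => v y * ((∫ x, h (x, y)) - g y)) := by
    have bnd : Integrable (fun y => ε/2 * v y ^ 2 + 1/(2*ε) * ((∫ x, h (x, y)) - g y) ^ 2) :=
      (v_sq_int.const_mul (ε/2)).add (margy_sq_int.const_mul (1/(2*ε)))
    refine Integrable.mono bnd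
      ((v_meas.aestronglyMeasurable.mul
        ((margy_meas.sub g_meas.stronglyMeasurable).aestronglyMeasurable))) ?_
    refine Filter.Eventually.of_forall fun y => ?_
    rw [Real.norm_eq_abs, Real.norm_eq_abs]
    have h1 : (0:ℝ) ≤ ε/2 * v y ^ 2 + 1/(2*ε) * ((∫ x, h (x, y)) - g y) ^ 2 := by positivity
    rw [abs_of_nonneg h1]
    have e1 : 1/(2*ε) * (((∫ x, h (x, y)) - g y) - ε * v y) ^ 2
        = ε/2 * v y ^ 2 + 1/(2*ε) * ((∫ x, h (x, y)) - g y) ^ 2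
          - v y * ((∫ x, h (x, y)) - g y) := by field_simp; ring
    have e2 : 1/(2*ε) * (((∫ x, h (x, y)) - g y) + ε * v y) ^ 2
        = ε/2 * v y ^ 2 + 1/(2*ε) * ((∫ x, h (x, y)) - g y) ^ 2
          + v y * ((∫ x, h (x, y)) - g y) := by field_simp; ring
    have p1 : (0:ℝ) ≤ 1/(2*ε) * (((∫ x, h (x, y)) - g y) - ε * v y) ^ 2 := by positivity
    have p2 : (0:ℝ) ≤ 1/(2*ε) * (((∫ x, h (x, y)) - g y) + ε * v y) ^ 2 := by positivity
    rcases abs_cases (v y * ((∫ x, h (x, y)) - g y)) with ⟨he, _⟩ | ⟨he, _⟩ <;> rw [he] <;>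
      linarith
  -- decompose marginal integrals
  have dec_u : (∫ x, u x * ∫ y, h (x, y))
      = (∫ x, u x * f x) + ∫ x, u x * ((∫ y, h (x, y)) - f x) := by
    have e : (fun x => u x * ∫ y, h (x, y))
        = fun x => u x * f x + u x * ((∫ y, h (x, y)) - f x) := by funext x; ring
    rw [e, integral_add uf_int udx_int]
  have dec_v : (∫ y, v y * ∫ x, h (x, y))
      = (∫ y, v y * g y) + ∫ y, v y * ((∫ x, h (x, y)) - g y) := by
    have e : (fun y => v y * ∫ x, h (x, y))
        = fun y => v y * g y + v y * ((∫ x, h (x, y)) - g y) := by funext y; ring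
    rw [e, integral_add vg_int vdy_int]
  -- A : feasibility integral
  have Feq : (fun p : (Fin m → ℝ) × (Fin n → ℝ) => (u p.1 + v p.2 - w p + c p) * h p)
      = fun p => c p * h p + u p.1 * h p + v p.2 * h p - w p * h p := by
    funext p; ring
  have FA : Integrable (fun p : (Fin m → ℝ) × (Fin n → ℝ) => (u p.1 + v p.2 - w p + c p) * h p) := by
    rw [Feq]; exact ((ch_int.add uh_int).add vh_int).sub wh_int
  have A_nonneg : 0 ≤ ∫ p : (Fin m → ℝ) × (Fin n → ℝ), (u p.1 + v p.2 - w p + c p) * h p := by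
    refine integral_nonneg_of_ae ?_
    filter_upwards [feas, h_bds] with p h1 h2
    exact mul_nonneg h1 h2.1
  have A_eq : (∫ p : (Fin m → ℝ) × (Fin n → ℝ), (u p.1 + v p.2 - w p + c p) * h p)
      = (∫ p, c p * h p) + (∫ p : (Fin m → ℝ) × (Fin n → ℝ), u p.1 * h p)
        + (∫ p : (Fin m → ℝ) × (Fin n → ℝ), v p.2 * h p) - ∫ p, w p * h p := by
    have i2 : Integrable (fun p : (Fin m → ℝ) × (Fin n → ℝ) => c p * h p + u p.1 * h p) :=
      ch_int.add uh_int
    have i3 : Integrable (fun p : (Fin m → ℝ) × (Fin n → ℝ) =>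
        c p * h p + u p.1 * h p + v p.2 * h p) := i2.add vh_int
    rw [Feq, integral_sub i3 wh_int, integral_add i2 vh_int, integral_add ch_int uh_int]
  -- B : slack integral
  have B_nonneg : 0 ≤ ∫ p : (Fin m → ℝ) × (Fin n → ℝ), w p * (h p - hbar p) := by
    refine integral_nonneg_of_ae ?_
    filter_upwards [w_nonpos, h_bds] with p h1 h2
    have h3 := mul_nonneg (neg_nonneg.2 h1) (neg_nonneg.2 (sub_nonpos.2 h2.2))
    have e : (-w p) * (-(h p - hbar p)) = w p * (h p - hbar p) := by ring
    rw [← e]; exact h3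
  have B_eq : (∫ p : (Fin m → ℝ) × (Fin n → ℝ), w p * (h p - hbar p))
      = (∫ p, w p * h p) - ∫ p, w p * hbar p := by
    have e : (fun p : (Fin m → ℝ) × (Fin n → ℝ) => w p * (h p - hbar p))
        = fun p => w p * h p - w p * hbar p := by funext p; ring
    rw [e, integral_sub wh_int whbar_int]
  -- C, D : quadratic completion
  have C_nonneg : 0 ≤ ∫ x, (1/(2*ε) * ((∫ y, h (x, y)) - f x) ^ 2 + ε/2 * u x ^ 2
      - u x * ((∫ y, h (x, y)) - f x)) := by
    refine integral_nonneg fun x => ?_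
    have h1 : 1/(2*ε) * (((∫ y, h (x, y)) - f x) - ε * u x) ^ 2
        = 1/(2*ε) * ((∫ y, h (x, y)) - f x) ^ 2 + ε/2 * u x ^ 2
          - u x * ((∫ y, h (x, y)) - f x) := by
      field_simp; ring
    have h2 : 0 ≤ 1/(2*ε) * (((∫ y, h (x, y)) - f x) - ε * u x) ^ 2 := by positivity
    rw [h1] at h2; exact h2
  have D_nonneg : 0 ≤ ∫ y, (1/(2*ε) * ((∫ x, h (x, y)) - g y) ^ 2 + ε/2 * v y ^ 2
      - v y * ((∫ x, h (x, y)) - g y)) := by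
    refine integral_nonneg fun y => ?_
    have h1 : 1/(2*ε) * (((∫ x, h (x, y)) - g y) - ε * v y) ^ 2
        = 1/(2*ε) * ((∫ x, h (x, y)) - g y) ^ 2 + ε/2 * v y ^ 2
          - v y * ((∫ x, h (x, y)) - g y) := by
      field_simp; ring
    have h2 : 0 ≤ 1/(2*ε) * (((∫ x, h (x, y)) - g y) - ε * v y) ^ 2 := by positivity
    rw [h1] at h2; exact h2
  have C_eq : (∫ x, (1/(2*ε) * ((∫ y, h (x, y)) - f x) ^ 2 + ε/2 * u x ^ 2
      - u x * ((∫ y, h (x, y)) - f x)))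
      = 1/(2*ε) * (∫ x, ((∫ y, h (x, y)) - f x) ^ 2) + ε/2 * (∫ x, u x ^ 2)
        - ∫ x, u x * ((∫ y, h (x, y)) - f x) := by
    have q1 : Integrable (fun x => 1/(2*ε) * ((∫ y, h (x, y)) - f x) ^ 2 + ε/2 * u x ^ 2) :=
      (margx_sq_int.const_mul (1/(2*ε))).add (u_sq_int.const_mul (ε/2))
    rw [integral_sub q1 udx_int,
      integral_add (margx_sq_int.const_mul (1/(2*ε))) (u_sq_int.const_mul (ε/2)),
      integral_const_mul, integral_const_mul]
  have D_eq : (∫ y, (1/(2*ε) * ((∫ x, h (x, y)) - g y) ^ 2 + ε/2 * v y ^ 2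
      - v y * ((∫ x, h (x, y)) - g y)))
      = 1/(2*ε) * (∫ y, ((∫ x, h (x, y)) - g y) ^ 2) + ε/2 * (∫ y, v y ^ 2)
        - ∫ y, v y * ((∫ x, h (x, y)) - g y) := by
    have q2 : Integrable (fun y => 1/(2*ε) * ((∫ x, h (x, y)) - g y) ^ 2 + ε/2 * v y ^ 2) :=
      (margy_sq_int.const_mul (1/(2*ε))).add (v_sq_int.const_mul (ε/2))
    rw [integral_sub q2 vdy_int,
      integral_add (margy_sq_int.const_mul (1/(2*ε))) (v_sq_int.const_mul (ε/2)),
      integral_const_mul, integral_const_mul]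
  rw [A_eq, fub_u, fub_v, dec_u, dec_v] at A_nonneg
  rw [B_eq] at B_nonneg
  rw [C_eq] at C_nonneg
  rw [D_eq] at D_nonneg
  linarith
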